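/- arXiv:2511.08875 — 2 statements merged into one kernel-verified Lean document; each statement's English description precedes it below -/
import Mathlib

section
/- Let A and E be n×n real symmetric matrices, Ã = A + E, with eigenvalues of A ordered decreasingly λ_1 ≥ … ≥ λ_n. Let Π_p (respectively Π̃_p) be the orthogonal projection onto the span of the eigenvectors of A (respectively Ã) corresponding to the p largest eigenvalues, and set δ_p := λ_p − λ_{p+1} > 0. Then ‖Π̃_p − Π_p‖ ≤ 2‖E‖/δ_p, where ‖·‖ is the spectral norm. -/
open Matrix Finset RealInnerProductSpace

/-- Spectral (ℓ²→ℓ²) operator norm of a real square matrix. -/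
noncomputable def specNorm {n : ℕ} (M : Matrix (Fin n) (Fin n) ℝ) : ℝ :=
  ‖LinearMap.toContinuousLinearMap (Matrix.toEuclideanLin M)‖

namespace DKAux

variable {n : ℕ}

noncomputable def ev (x : Fin n → ℝ) : EuclideanSpace ℝ (Fin n) :=
  (WithLp.equiv 2 (Fin n → ℝ)).symm x

lemma ev_surj (y : EuclideanSpace ℝ (Fin n)) : ∃ x, ev x = y :=
  ⟨(WithLp.equiv 2 (Fin n → ℝ)) y, by simp [ev]⟩

lemma inner_ev (x y : Fin n → ℝ) : ⟪ev x, ev y⟫ = x ⬝ᵥ y := by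
  simp [ev, PiLp.inner_apply, RCLike.inner_apply, dotProduct, mul_comm]

lemma norm_ev_sq (x : Fin n → ℝ) : ‖ev x‖ ^ 2 = x ⬝ᵥ x := by
  rw [← real_inner_self_eq_norm_sq, inner_ev]

lemma ev_smul (c : ℝ) (x : Fin n → ℝ) : ev (c • x) = c • ev x := rfl

lemma ev_sub (x y : Fin n → ℝ) : ev (x - y) = ev x - ev y := rfl

noncomputable def tc (M : Matrix (Fin n) (Fin n) ℝ) :
    EuclideanSpace ℝ (Fin n) →L[ℝ] EuclideanSpace ℝ (Fin n) :=
  LinearMap.toContinuousLinearMap (Matrix.toEuclideanLin M)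

lemma tc_apply (M : Matrix (Fin n) (Fin n) ℝ) (x : Fin n → ℝ) :
    tc M (ev x) = ev (M *ᵥ x) := by
  simp [tc, ev]

lemma specNorm_eq (M : Matrix (Fin n) (Fin n) ℝ) : specNorm M = ‖tc M‖ := rfl

lemma specNorm_nonneg (M : Matrix (Fin n) (Fin n) ℝ) : 0 ≤ specNorm M :=
  norm_nonneg _

lemma norm_mulVec_le (M : Matrix (Fin n) (Fin n) ℝ) (x : Fin n → ℝ) :
    ‖ev (M *ᵥ x)‖ ≤ specNorm M * ‖ev x‖ := by
  rw [← tc_apply, specNorm_eq]; exact (tc M).le_opNorm _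

lemma specNorm_le {M : Matrix (Fin n) (Fin n) ℝ} {c : ℝ} (hc : 0 ≤ c)
    (h : ∀ x, ‖ev (M *ᵥ x)‖ ≤ c * ‖ev x‖) : specNorm M ≤ c := by
  rw [specNorm_eq]
  refine (tc M).opNorm_le_bound hc fun y => ?_
  obtain ⟨x, rfl⟩ := ev_surj y
  rw [tc_apply]; exact h x

lemma dot_bound (M : Matrix (Fin n) (Fin n) ℝ) (x y : Fin n → ℝ) :
    |x ⬝ᵥ (M *ᵥ y)| ≤ specNorm M * ‖ev x‖ * ‖ev y‖ := by
  rw [← inner_ev]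
  calc |⟪ev x, ev (M *ᵥ y)⟫| ≤ ‖ev x‖ * ‖ev (M *ᵥ y)‖ := abs_real_inner_le_norm _ _
    _ ≤ ‖ev x‖ * (specNorm M * ‖ev y‖) := by
        have := norm_mulVec_le M y
        exact mul_le_mul_of_nonneg_left this (norm_nonneg _)
    _ = specNorm M * ‖ev x‖ * ‖ev y‖ := by ring

lemma specNorm_neg (M : Matrix (Fin n) (Fin n) ℝ) : specNorm (-M) = specNorm M := by
  rw [specNorm_eq, specNorm_eq]
  have : tc (-M) = -(tc M) := by
    apply ContinuousLinearMap.ext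
    intro y
    obtain ⟨x, rfl⟩ := ev_surj y
    show tc (-M) (ev x) = -(tc M (ev x))
    rw [tc_apply, tc_apply, Matrix.neg_mulVec]
    rfl
  rw [this, norm_neg]

lemma transpose_dot (M : Matrix (Fin n) (Fin n) ℝ) (x y : Fin n → ℝ) :
    (Mᵀ *ᵥ x) ⬝ᵥ y = x ⬝ᵥ (M *ᵥ y) := by
  rw [Matrix.mulVec_transpose, ← Matrix.dotProduct_mulVec]

lemma sq_le_imp {a b : ℝ} (hb : 0 ≤ b) (h : a ^ 2 ≤ b ^ 2) (ha : 0 ≤ a) : a ≤ b := by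
  nlinarith

lemma specNorm_transpose (M : Matrix (Fin n) (Fin n) ℝ) :
    specNorm Mᵀ = specNorm M := by
  have key : ∀ N : Matrix (Fin n) (Fin n) ℝ, specNorm Nᵀ ≤ specNorm N := by
    intro N
    refine specNorm_le (specNorm_nonneg N) fun x => ?_
    have h1 : ‖ev (Nᵀ *ᵥ x)‖ ^ 2 ≤ specNorm N * ‖ev x‖ * ‖ev (Nᵀ *ᵥ x)‖ := by
      rw [norm_ev_sq]
      calc (Nᵀ *ᵥ x) ⬝ᵥ (Nᵀ *ᵥ x) = x ⬝ᵥ (N *ᵥ (Nᵀ *ᵥ x)) := transpose_dot N x _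
        _ ≤ |x ⬝ᵥ (N *ᵥ (Nᵀ *ᵥ x))| := le_abs_self _
        _ ≤ specNorm N * ‖ev x‖ * ‖ev (Nᵀ *ᵥ x)‖ := dot_bound N x _
    rcases eq_or_lt_of_le (norm_nonneg (ev (Nᵀ *ᵥ x))) with h0 | h0
    · rw [← h0]
      have h2 : 0 ≤ specNorm N * ‖ev x‖ := mul_nonneg (specNorm_nonneg N) (norm_nonneg _)
      linarith
    · nlinarith [mul_nonneg (specNorm_nonneg N) (norm_nonneg (ev x))]
  refine le_antisymm (key M) ?_
  have := key Mᵀ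
  rwa [Matrix.transpose_transpose] at this

lemma sum_mulVec' {ι : Type*} (s : Finset ι) (M : ι → Matrix (Fin n) (Fin n) ℝ)
    (x : Fin n → ℝ) : (∑ i ∈ s, M i) *ᵥ x = ∑ i ∈ s, M i *ᵥ x := by
  ext j
  simp only [mulVec, dotProduct, Matrix.sum_apply, Finset.sum_apply, Finset.sum_mul]
  exact Finset.sum_comm

lemma dot_sum (x : Fin n → ℝ) (s : Finset ℕ) (f : ℕ → Fin n → ℝ) :
    x ⬝ᵥ (∑ i ∈ s, f i) = ∑ i ∈ s, x ⬝ᵥ f i := by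
  simp only [dotProduct, Finset.sum_apply, Finset.mul_sum]
  exact Finset.sum_comm

lemma vv_mulVec (a b x : Fin n → ℝ) : vecMulVec a b *ᵥ x = (b ⬝ᵥ x) • a := by
  ext i
  simp [vecMulVec, mulVec, dotProduct, Finset.mul_sum, mul_assoc, mul_comm, mul_left_comm]

lemma vv_transpose (a b : Fin n → ℝ) : (vecMulVec a b)ᵀ = vecMulVec b a := by
  ext i j; simp [vecMulVec, mul_comm]

lemma vv_mul_vv (a b c d : Fin n → ℝ) :
    vecMulVec a b * vecMulVec c d = (b ⬝ᵥ c) • vecMulVec a d := by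
  ext i j
  simp [vecMulVec, Matrix.mul_apply, dotProduct, Finset.sum_mul, Finset.mul_sum,
    mul_assoc, mul_comm, mul_left_comm]


section Ortho

variable {n : ℕ} (v : ℕ → Fin n → ℝ)
variable (hon : ∀ i ∈ Finset.Icc 1 n, ∀ j ∈ Finset.Icc 1 n,
    v i ⬝ᵥ v j = if i = j then 1 else 0)

lemma sum_Icc_one_eq {M : Type*} [AddCommMonoid M] (f : ℕ → M) :
    ∑ i ∈ Icc 1 n, f i = ∑ a : Fin n, f (a.1 + 1) := by
  rw [show Icc 1 n = Ico 1 (n+1) by rfl, Finset.sum_Ico_eq_sum_range,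
    Fin.sum_univ_eq_sum_range (fun i => f (i+1)) n]
  simp [add_comm]

include hon in
lemma complete : (∑ i ∈ Icc 1 n, vecMulVec (v i) (v i)) = (1 : Matrix (Fin n) (Fin n) ℝ) := by
  set U : Matrix (Fin n) (Fin n) ℝ := Matrix.of fun i j => v (i.1 + 1) j with hU
  have hmem : ∀ a : Fin n, a.1 + 1 ∈ Icc 1 n := by
    intro a; simp only [Finset.mem_Icc]; omega
  have hUU : U * Uᵀ = 1 := by
    ext i j
    have := hon _ (hmem i) _ (hmem j)
    simp only [Matrix.mul_apply, Matrix.transpose_apply, hU, Matrix.of_apply]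
    rw [show (∑ k, v (i.1+1) k * v (j.1+1) k) = v (i.1+1) ⬝ᵥ v (j.1+1) from rfl, this]
    have : (i.1 + 1 = j.1 + 1) ↔ i = j := by
      constructor
      · intro h; exact Fin.ext (by omega)
      · intro h; rw [h]
    simp only [Matrix.one_apply]
    by_cases h : i = j
    · simp [h]
    · rw [if_neg (fun hc => h (this.mp hc)), if_neg h]
  have hUtU : Uᵀ * U = 1 := mul_eq_one_comm.mp hUU
  rw [sum_Icc_one_eq]
  rw [← hUtU]
  ext j k
  simp only [Matrix.sum_apply, Matrix.mul_apply, Matrix.transpose_apply, hU, Matrix.of_apply,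
    vecMulVec_apply]

include hon in
lemma parseval (x : Fin n → ℝ) : x ⬝ᵥ x = ∑ i ∈ Icc 1 n, (v i ⬝ᵥ x) ^ 2 := by
  have h1 : x ⬝ᵥ ((1 : Matrix (Fin n) (Fin n) ℝ) *ᵥ x) = x ⬝ᵥ x := by simp
  rw [← h1, ← complete v hon, sum_mulVec', dot_sum]
  refine Finset.sum_congr rfl fun i _ => ?_
  rw [vv_mulVec, dotProduct_smul]
  have : x ⬝ᵥ v i = v i ⬝ᵥ x := by rw [dotProduct_comm]
  rw [smul_eq_mul, this]; ring

lemma rayleigh_eq (lam : ℕ → ℝ) (M : Matrix (Fin n) (Fin n) ℝ)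
    (hMeq : M = ∑ i ∈ Icc 1 n, lam i • vecMulVec (v i) (v i)) (x : Fin n → ℝ) :
    x ⬝ᵥ (M *ᵥ x) = ∑ i ∈ Icc 1 n, lam i * (v i ⬝ᵥ x) ^ 2 := by
  rw [hMeq, sum_mulVec', dot_sum]
  refine Finset.sum_congr rfl fun i _ => ?_
  rw [Matrix.smul_mulVec, vv_mulVec, dotProduct_smul, dotProduct_smul]
  have : x ⬝ᵥ v i = v i ⬝ᵥ x := dotProduct_comm _ _
  rw [smul_eq_mul, smul_eq_mul, this]; ring

include hon in
lemma rayleigh_upper (lam : ℕ → ℝ)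
    (hdec : ∀ i ∈ Finset.Icc 1 n, ∀ j ∈ Finset.Icc 1 n, i ≤ j → lam j ≤ lam i)
    (M : Matrix (Fin n) (Fin n) ℝ)
    (hMeq : M = ∑ i ∈ Icc 1 n, lam i • vecMulVec (v i) (v i))
    (k : ℕ) (hk : k ∈ Icc 1 n) (y : Fin n → ℝ)
    (h0 : ∀ i ∈ Icc 1 n, i < k → v i ⬝ᵥ y = 0) :
    y ⬝ᵥ (M *ᵥ y) ≤ lam k * (y ⬝ᵥ y) := by
  rw [rayleigh_eq v lam M hMeq y, parseval v hon y, Finset.mul_sum]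
  refine Finset.sum_le_sum fun i hi => ?_
  rcases lt_or_ge i k with h | h
  · rw [h0 i hi h]; simp
  · exact mul_le_mul_of_nonneg_right (hdec k hk i hi h) (sq_nonneg _)

include hon in
lemma rayleigh_lower (lam : ℕ → ℝ)
    (hdec : ∀ i ∈ Finset.Icc 1 n, ∀ j ∈ Finset.Icc 1 n, i ≤ j → lam j ≤ lam i)
    (M : Matrix (Fin n) (Fin n) ℝ)
    (hMeq : M = ∑ i ∈ Icc 1 n, lam i • vecMulVec (v i) (v i))
    (k : ℕ) (hk : k ∈ Icc 1 n) (y : Fin n → ℝ)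
    (h0 : ∀ i ∈ Icc 1 n, k < i → v i ⬝ᵥ y = 0) :
    lam k * (y ⬝ᵥ y) ≤ y ⬝ᵥ (M *ᵥ y) := by
  rw [rayleigh_eq v lam M hMeq y, parseval v hon y, Finset.mul_sum]
  refine Finset.sum_le_sum fun i hi => ?_
  rcases lt_or_ge k i with h | h
  · rw [h0 i hi h]; simp
  · exact mul_le_mul_of_nonneg_right (hdec i hi k hk h) (sq_nonneg _)

include hon in
lemma sum_vv_mul_sum_vv (S T : Finset ℕ) (hS : S ⊆ Icc 1 n) (hT : T ⊆ Icc 1 n)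
    (c d : ℕ → ℝ) :
    (∑ i ∈ S, c i • vecMulVec (v i) (v i)) * (∑ j ∈ T, d j • vecMulVec (v j) (v j)) =
      ∑ i ∈ S ∩ T, (c i * d i) • vecMulVec (v i) (v i) := by
  rw [Finset.sum_mul_sum]
  have : ∀ i ∈ S, ∀ j ∈ T,
      (c i • vecMulVec (v i) (v i)) * (d j • vecMulVec (v j) (v j)) =
        if j = i then (c i * d i) • vecMulVec (v i) (v i) else 0 := by
    intro i hi j hj
    rw [Matrix.smul_mul, Matrix.mul_smul, vv_mul_vv, hon i (hS hi) j (hT hj)]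
    by_cases h : i = j
    · subst h; simp [smul_smul, mul_comm]
    · rw [if_neg h, if_neg (fun hc => h hc.symm)]
      simp
  calc (∑ i ∈ S, ∑ j ∈ T, (c i • vecMulVec (v i) (v i)) * (d j • vecMulVec (v j) (v j)))
      = ∑ i ∈ S, ∑ j ∈ T, if j = i then (c i * d i) • vecMulVec (v i) (v i) else 0 := by
        refine Finset.sum_congr rfl fun i hi => Finset.sum_congr rfl fun j hj => this i hi j hj
    _ = ∑ i ∈ S, if i ∈ T then (c i * d i) • vecMulVec (v i) (v i) else 0 := by
        refine Finset.sum_congr rfl fun i _ => Finset.sum_ite_eq' T i _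
    _ = ∑ i ∈ S ∩ T, (c i * d i) • vecMulVec (v i) (v i) := Finset.sum_ite_mem S T _

include hon in
lemma dot_proj (p : ℕ) (hp : p ≤ n) (j : ℕ) (hj : j ∈ Icc 1 n) (y : Fin n → ℝ) :
    v j ⬝ᵥ ((∑ i ∈ Icc 1 p, vecMulVec (v i) (v i)) *ᵥ y) =
      if j ∈ Icc 1 p then v j ⬝ᵥ y else 0 := by
  rw [sum_mulVec', dot_sum]
  have hsub : Icc 1 p ⊆ Icc 1 n := Finset.Icc_subset_Icc le_rfl hp
  have : ∀ i ∈ Icc 1 p,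
      v j ⬝ᵥ (vecMulVec (v i) (v i) *ᵥ y) = if i = j then v j ⬝ᵥ y else 0 := by
    intro i hi
    rw [vv_mulVec, dotProduct_smul, hon j hj i (hsub hi)]
    by_cases h : i = j
    · subst h; simp
    · rw [if_neg (fun hc => h hc.symm), if_neg h]; simp
  rw [Finset.sum_congr rfl this]
  rw [Finset.sum_ite_eq' (Icc 1 p) j _]

end Ortho


section Weyl

variable {n : ℕ} (A E : Matrix (Fin n) (Fin n) ℝ)
    (lamA : ℕ → ℝ) (u : ℕ → Fin n → ℝ)
    (lamB : ℕ → ℝ) (w : ℕ → Fin n → ℝ)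

lemma weyl
    (hAdec : ∀ i ∈ Finset.Icc 1 n, ∀ j ∈ Finset.Icc 1 n, i ≤ j → lamA j ≤ lamA i)
    (hAon : ∀ i ∈ Finset.Icc 1 n, ∀ j ∈ Finset.Icc 1 n,
      u i ⬝ᵥ u j = if i = j then 1 else 0)
    (hAeq : A = ∑ i ∈ Finset.Icc 1 n, lamA i • Matrix.vecMulVec (u i) (u i))
    (hBdec : ∀ i ∈ Finset.Icc 1 n, ∀ j ∈ Finset.Icc 1 n, i ≤ j → lamB j ≤ lamB i)
    (hBon : ∀ i ∈ Finset.Icc 1 n, ∀ j ∈ Finset.Icc 1 n,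
      w i ⬝ᵥ w j = if i = j then 1 else 0)
    (hBeq : A + E = ∑ i ∈ Finset.Icc 1 n, lamB i • Matrix.vecMulVec (w i) (w i))
    (k : ℕ) (hk : k ∈ Icc 1 n) :
    lamA k - specNorm E ≤ lamB k := by
  obtain ⟨hk1, hkn⟩ := Finset.mem_Icc.mp hk
  set fU : Fin k → EuclideanSpace ℝ (Fin n) := fun a => ev (u (a.1 + 1)) with hfU
  set fW : Fin (n + 1 - k) → EuclideanSpace ℝ (Fin n) := fun a => ev (w (k + a.1)) with hfW
  have hmemU : ∀ a : Fin k, a.1 + 1 ∈ Icc 1 n := by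
    intro a; have := a.isLt; simp only [Finset.mem_Icc]; omega
  have hmemW : ∀ a : Fin (n + 1 - k), k + a.1 ∈ Icc 1 n := by
    intro a; have := a.isLt; simp only [Finset.mem_Icc]; omega
  have hUon : Orthonormal ℝ fU := by
    rw [orthonormal_iff_ite]
    intro a b
    rw [hfU]
    show ⟪ev (u (a.1+1)), ev (u (b.1+1))⟫ = _
    rw [inner_ev, hAon _ (hmemU a) _ (hmemU b)]
    by_cases h : a = b
    · simp [h]
    · rw [if_neg (fun hc : a.1 + 1 = b.1 + 1 => h (Fin.ext (by omega))), if_neg h]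
  have hWon : Orthonormal ℝ fW := by
    rw [orthonormal_iff_ite]
    intro a b
    rw [hfW]
    show ⟪ev (w (k+a.1)), ev (w (k+b.1))⟫ = _
    rw [inner_ev, hBon _ (hmemW a) _ (hmemW b)]
    by_cases h : a = b
    · simp [h]
    · rw [if_neg (fun hc : k + a.1 = k + b.1 => h (Fin.ext (by omega))), if_neg h]
  set V := Submodule.span ℝ (Set.range fU) with hVdef
  set W := Submodule.span ℝ (Set.range fW) with hWdef
  have hV : Module.finrank ℝ V = k := by
    rw [finrank_span_eq_card hUon.linearIndependent, Fintype.card_fin]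
  have hW : Module.finrank ℝ W = n + 1 - k := by
    rw [finrank_span_eq_card hWon.linearIndependent, Fintype.card_fin]
  have hsum := Submodule.finrank_sup_add_finrank_inf_eq V W
  have hle : Module.finrank ℝ ↥(V ⊔ W) ≤ n :=
    le_trans (Submodule.finrank_le _) (le_of_eq finrank_euclideanSpace_fin)
  have hpos : 0 < Module.finrank ℝ ↥(V ⊓ W) := by omega
  have : Nontrivial ↥(V ⊓ W) := Module.nontrivial_of_finrank_pos hpos
  obtain ⟨y, hy0⟩ := exists_ne (0 : ↥(V ⊓ W))
  have hxV : (y : EuclideanSpace ℝ (Fin n)) ∈ V := y.2.1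
  have hxW : (y : EuclideanSpace ℝ (Fin n)) ∈ W := y.2.2
  have hxne : (y : EuclideanSpace ℝ (Fin n)) ≠ 0 := fun hc => hy0 (Subtype.ext hc)
  set x' : Fin n → ℝ := (WithLp.equiv 2 (Fin n → ℝ)) (y : EuclideanSpace ℝ (Fin n)) with hx'
  have hevx : ev x' = (y : EuclideanSpace ℝ (Fin n)) := rfl
  have ht : 0 < x' ⬝ᵥ x' := by
    rw [← norm_ev_sq, hevx]
    have : ‖(y : EuclideanSpace ℝ (Fin n))‖ ≠ 0 := norm_ne_zero_iff.mpr hxne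
    positivity
  have hu0 : ∀ i ∈ Icc 1 n, k < i → u i ⬝ᵥ x' = 0 := by
    intro i hi hki
    have hker : V ≤ LinearMap.ker ((innerSL ℝ (ev (u i)) : EuclideanSpace ℝ (Fin n) →ₗ[ℝ] ℝ)) := by
      rw [hVdef, Submodule.span_le]
      rintro _ ⟨a, rfl⟩
      have := hmemU a
      simp only [SetLike.mem_coe, LinearMap.mem_ker, ContinuousLinearMap.coe_coe, innerSL_apply_apply]
      show ⟪ev (u i), ev (u (a.1+1))⟫ = 0
      rw [inner_ev, hAon _ hi _ (hmemU a), if_neg (by have := a.isLt; omega)]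
    have := hker hxV
    simp only [LinearMap.mem_ker, ContinuousLinearMap.coe_coe, innerSL_apply_apply] at this
    rw [← hevx] at this
    rwa [inner_ev] at this
  have hw0 : ∀ j ∈ Icc 1 n, j < k → w j ⬝ᵥ x' = 0 := by
    intro j hj hjk
    have hker : W ≤ LinearMap.ker ((innerSL ℝ (ev (w j)) : EuclideanSpace ℝ (Fin n) →ₗ[ℝ] ℝ)) := by
      rw [hWdef, Submodule.span_le]
      rintro _ ⟨a, rfl⟩
      simp only [SetLike.mem_coe, LinearMap.mem_ker, ContinuousLinearMap.coe_coe, innerSL_apply_apply]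
      show ⟪ev (w j), ev (w (k+a.1))⟫ = 0
      rw [inner_ev, hBon _ hj _ (hmemW a), if_neg (by omega)]
    have := hker hxW
    simp only [LinearMap.mem_ker, ContinuousLinearMap.coe_coe, innerSL_apply_apply] at this
    rw [← hevx] at this
    rwa [inner_ev] at this
  have h1 : lamA k * (x' ⬝ᵥ x') ≤ x' ⬝ᵥ (A *ᵥ x') :=
    rayleigh_lower u hAon lamA hAdec A hAeq k hk x' hu0
  have h2 : x' ⬝ᵥ ((A + E) *ᵥ x') ≤ lamB k * (x' ⬝ᵥ x') :=
    rayleigh_upper w hBon lamB hBdec (A + E) hBeq k hk x' hw0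
  have h3 : |x' ⬝ᵥ (E *ᵥ x')| ≤ specNorm E * (x' ⬝ᵥ x') := by
    have := dot_bound E x' x'
    have hn2 : ‖ev x'‖ * ‖ev x'‖ = x' ⬝ᵥ x' := by rw [← norm_ev_sq]; ring
    calc |x' ⬝ᵥ (E *ᵥ x')| ≤ specNorm E * ‖ev x'‖ * ‖ev x'‖ := this
      _ = specNorm E * (x' ⬝ᵥ x') := by rw [mul_assoc, hn2]
  have h4 : x' ⬝ᵥ ((A + E) *ᵥ x') = x' ⬝ᵥ (A *ᵥ x') + x' ⬝ᵥ (E *ᵥ x') := by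
    rw [Matrix.add_mulVec, dotProduct_add]
  have h5 := abs_le.mp h3
  nlinarith [h5.1, h5.2]

end Weyl


section SinTheta

variable {n : ℕ}

lemma specNorm_zero_of_n_zero (hn : n = 0) (M : Matrix (Fin n) (Fin n) ℝ) :
    specNorm M = 0 := by
  subst hn
  have : tc M = 0 := by
    apply ContinuousLinearMap.ext
    intro x
    apply Subsingleton.elim
  rw [specNorm_eq, this, norm_zero]

lemma exists_norm_attained (hn : n ≠ 0) (f : EuclideanSpace ℝ (Fin n) →L[ℝ] EuclideanSpace ℝ (Fin n)) :
    ∃ v : EuclideanSpace ℝ (Fin n), ‖v‖ = 1 ∧ ‖f v‖ = ‖f‖ := by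
  have hpos : 0 < n := Nat.pos_of_ne_zero hn
  set x0 : EuclideanSpace ℝ (Fin n) := EuclideanSpace.single ⟨0, hpos⟩ (1 : ℝ) with hx0
  have hx0n : ‖x0‖ = 1 := by rw [hx0, EuclideanSpace.norm_single]; norm_num
  have hx0S : x0 ∈ Metric.sphere (0 : EuclideanSpace ℝ (Fin n)) 1 :=
    by rwa [mem_sphere_zero_iff_norm]
  obtain ⟨v, hvS, hmax⟩ := (isCompact_sphere (0 : EuclideanSpace ℝ (Fin n)) 1).exists_isMaxOn
    ⟨x0, hx0S⟩ (f.continuous.norm.continuousOn)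
  have hv1 : ‖v‖ = 1 := mem_sphere_zero_iff_norm.mp hvS
  refine ⟨v, hv1, le_antisymm ?_ ?_⟩
  · calc ‖f v‖ ≤ ‖f‖ * ‖v‖ := f.le_opNorm v
      _ = ‖f‖ := by rw [hv1, mul_one]
  · refine f.opNorm_le_bound (norm_nonneg _) fun x => ?_
    by_cases hx : x = 0
    · simp [hx]
    · have hxn : ‖x‖ ≠ 0 := norm_ne_zero_iff.mpr hx
      set y := ‖x‖⁻¹ • x with hy
      have hyS : y ∈ Metric.sphere (0 : EuclideanSpace ℝ (Fin n)) 1 := by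
        rw [mem_sphere_zero_iff_norm, hy, norm_smul, norm_inv, norm_norm,
          inv_mul_cancel₀ hxn]
      have hyb : ‖f y‖ ≤ ‖f v‖ := hmax hyS
      have : f y = ‖x‖⁻¹ • f x := by rw [hy, f.map_smul]
      rw [this, norm_smul, norm_inv, norm_norm] at hyb
      calc ‖f x‖ = ‖x‖ * (‖x‖⁻¹ * ‖f x‖) := by field_simp
        _ ≤ ‖x‖ * ‖f v‖ := mul_le_mul_of_nonneg_left hyb (norm_nonneg _)
        _ = ‖f v‖ * ‖x‖ := mul_comm _ _

lemma sintheta (A B P Q : Matrix (Fin n) (Fin n) ℝ) (α β : ℝ)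
    (hPsym : Pᵀ = P) (hPP : P * P = P) (hQsym : Qᵀ = Q) (hQQ : Q * Q = Q)
    (hAP : A * P = P * A) (hBQ : B * Q = Q * B)
    (hα : ∀ y, P *ᵥ y = 0 → y ⬝ᵥ (A *ᵥ y) ≤ α * (y ⬝ᵥ y))
    (hβ : ∀ z, Q *ᵥ z = z → β * (z ⬝ᵥ z) ≤ z ⬝ᵥ (B *ᵥ z))
    (hab : α < β) :
    specNorm ((1 - P) * Q) ≤ specNorm (B - A) / (β - α) := by
  set T := (1 - P) * Q with hT
  rcases le_or_gt (specNorm T) 0 with hσ | hσ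
  · exact le_trans hσ (div_nonneg (specNorm_nonneg _) (by linarith))
  have hn : n ≠ 0 := by
    rintro rfl
    rw [specNorm_zero_of_n_zero rfl] at hσ
    exact lt_irrefl 0 hσ
  set σ := specNorm T with hσdef
  obtain ⟨v, hv1, hfv⟩ := exists_norm_attained hn (tc T)
  obtain ⟨v', rfl⟩ := ev_surj v
  have hσne : σ ≠ 0 := ne_of_gt hσ
  have hv'dot : v' ⬝ᵥ v' = 1 := by rw [← norm_ev_sq, hv1]; norm_num
  set Tv := T *ᵥ v' with hTvdef
  have hTvnorm : ‖ev Tv‖ = σ := by rw [hσdef, specNorm_eq, ← hfv, tc_apply]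
  have hTvdot : Tv ⬝ᵥ Tv = σ ^ 2 := by rw [← norm_ev_sq, hTvnorm]
  set z := Tᵀ *ᵥ Tv with hzdef
  have hz1 : v' ⬝ᵥ z = σ ^ 2 := by
    rw [hzdef, dotProduct_comm, transpose_dot, ← hTvdef, hTvdot]
  have hinner : ⟪ev v', ev z⟫ = σ ^ 2 := by rw [inner_ev, hz1]
  have hznorm_le : ‖ev z‖ ≤ σ ^ 2 := by
    calc ‖ev z‖ ≤ specNorm Tᵀ * ‖ev Tv‖ := norm_mulVec_le _ _
      _ = σ * σ := by rw [specNorm_transpose, hTvnorm]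
      _ = σ ^ 2 := by ring
  have hznorm_ge : σ ^ 2 ≤ ‖ev z‖ := by
    calc σ ^ 2 = ⟪ev v', ev z⟫ := hinner.symm
      _ ≤ ‖ev v'‖ * ‖ev z‖ := real_inner_le_norm _ _
      _ = ‖ev z‖ := by rw [hv1, one_mul]
  have hzn : ‖ev z‖ = σ ^ 2 := le_antisymm hznorm_le hznorm_ge
  have heq : ⟪ev v', ev z⟫ = ‖ev v'‖ * ‖ev z‖ := by rw [hinner, hv1, hzn, one_mul]
  have hsmul := inner_eq_norm_mul_iff_real.mp heq
  rw [hzn, hv1, one_smul] at hsmul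
  -- hsmul : σ ^ 2 • ev v' = ev z
  have hzv : z = (σ ^ 2) • v' := by
    have : ev z = ev ((σ ^ 2) • v') := by rw [ev_smul]; exact hsmul.symm
    exact (WithLp.equiv 2 (Fin n → ℝ)).symm.injective this
  set vy : Fin n → ℝ := σ⁻¹ • Tv with hvydef
  have hTveq : σ • vy = Tv := by
    rw [hvydef, smul_smul, mul_inv_cancel₀ hσne, one_smul]
  have hvydot : vy ⬝ᵥ vy = 1 := by
    rw [hvydef, smul_dotProduct, dotProduct_smul, hTvdot, smul_eq_mul,
      smul_eq_mul]
    field_simp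
  have hTty : Tᵀ *ᵥ vy = σ • v' := by
    rw [hvydef, Matrix.mulVec_smul, ← hzdef, hzv, smul_smul]
    rw [show σ⁻¹ * σ ^ 2 = σ by field_simp]
  have hPT : P * T = 0 := by
    rw [hT, ← Matrix.mul_assoc, Matrix.mul_sub, Matrix.mul_one, hPP, sub_self,
      Matrix.zero_mul]
  have hPy : P *ᵥ vy = 0 := by
    rw [hvydef, Matrix.mulVec_smul, hTvdef, Matrix.mulVec_mulVec, hPT, Matrix.zero_mulVec,
      smul_zero]
  have hTt : Tᵀ = Q * (1 - P) := by
    rw [hT, Matrix.transpose_mul, hQsym, Matrix.transpose_sub, Matrix.transpose_one, hPsym]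
  have hQTt : Q * Tᵀ = Tᵀ := by
    rw [hTt, ← Matrix.mul_assoc, hQQ]
  have hQv : Q *ᵥ v' = v' := by
    have h1 : Q *ᵥ (σ • v') = σ • v' := by
      rw [← hTty, Matrix.mulVec_mulVec, hQTt]
    rw [Matrix.mulVec_smul] at h1
    exact smul_right_injective _ hσne h1
  have e1 : A * (1 - P) = (1 - P) * A := by
    rw [Matrix.mul_sub, Matrix.sub_mul, Matrix.mul_one, Matrix.one_mul, hAP]
  have hkey : A * T - T * B = (1 - P) * ((A - B) * Q) := by
    rw [hT]
    calc A * ((1 - P) * Q) - (1 - P) * Q * B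
        = (A * (1 - P)) * Q - (1 - P) * (Q * B) := by rw [Matrix.mul_assoc, Matrix.mul_assoc]
      _ = ((1 - P) * A) * Q - (1 - P) * (B * Q) := by rw [e1, hBQ]
      _ = (1 - P) * (A * Q) - (1 - P) * (B * Q) := by rw [Matrix.mul_assoc]
      _ = (1 - P) * (A * Q - B * Q) := by rw [← Matrix.mul_sub]
      _ = (1 - P) * ((A - B) * Q) := by rw [← Matrix.sub_mul]
  set s := vy ⬝ᵥ ((A * T - T * B) *ᵥ v') with hsdef
  have hub : s ≤ σ * α - σ * β := by
    have hsplit : s = vy ⬝ᵥ (A *ᵥ Tv) - vy ⬝ᵥ (T *ᵥ (B *ᵥ v')) := by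
      rw [hsdef, Matrix.sub_mulVec, dotProduct_sub,
        ← Matrix.mulVec_mulVec v' A T, ← Matrix.mulVec_mulVec v' T B, ← hTvdef]
    have h1 : vy ⬝ᵥ (A *ᵥ Tv) ≤ σ * α := by
      rw [← hTveq, Matrix.mulVec_smul, dotProduct_smul, smul_eq_mul]
      have := hα vy hPy
      rw [hvydot, mul_one] at this
      exact mul_le_mul_of_nonneg_left this (le_of_lt hσ)
    have h2 : σ * β ≤ vy ⬝ᵥ (T *ᵥ (B *ᵥ v')) := by
      rw [← transpose_dot, hTty, smul_dotProduct, smul_eq_mul]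
      have := hβ v' hQv
      rw [hv'dot, mul_one] at this
      exact mul_le_mul_of_nonneg_left this (le_of_lt hσ)
    rw [hsplit]
    linarith
  have hval : s = vy ⬝ᵥ ((A - B) *ᵥ v') := by
    rw [hsdef, hkey]
    rw [← Matrix.mulVec_mulVec v' (1 - P) ((A - B) * Q)]
    rw [← transpose_dot (1 - P) vy _]
    rw [Matrix.transpose_sub, Matrix.transpose_one, hPsym, Matrix.sub_mulVec, hPy]
    rw [show (1 : Matrix (Fin n) (Fin n) ℝ) *ᵥ vy - 0 = vy by simp]
    rw [← Matrix.mulVec_mulVec v' (A - B) Q, hQv]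
  have hvy1 : ‖ev vy‖ = 1 := by
    have h := norm_ev_sq vy
    rw [hvydot] at h
    nlinarith [norm_nonneg (ev vy)]
  have habs : |s| ≤ specNorm (B - A) := by
    rw [hval]
    calc |vy ⬝ᵥ ((A - B) *ᵥ v')| ≤ specNorm (A - B) * ‖ev vy‖ * ‖ev v'‖ := dot_bound _ _ _
      _ = specNorm (A - B) := by rw [hvy1, hv1]; ring
      _ = specNorm (B - A) := by rw [show A - B = -(B - A) from (neg_sub B A).symm, specNorm_neg]
  have hfinal : σ * (β - α) ≤ specNorm (B - A) := by
    have h1 : σ * (β - α) ≤ -s := by linarith [hub]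
    calc σ * (β - α) ≤ -s := h1
      _ ≤ |s| := neg_le_abs s
      _ ≤ specNorm (B - A) := habs
  rw [le_div_iff₀ (by linarith : (0:ℝ) < β - α)]
  exact hfinal

end SinTheta


section Proj

variable {n : ℕ}

lemma sym_dot (P : Matrix (Fin n) (Fin n) ℝ) (hPsym : Pᵀ = P) (a c : Fin n → ℝ) :
    a ⬝ᵥ (P *ᵥ c) = (P *ᵥ a) ⬝ᵥ c := by
  rw [← transpose_dot P a c, hPsym]

lemma proj_pyth (P : Matrix (Fin n) (Fin n) ℝ) (hPsym : Pᵀ = P) (hPP : P * P = P)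
    (x : Fin n → ℝ) :
    ‖ev (P *ᵥ x)‖ ^ 2 + ‖ev ((1 - P) *ᵥ x)‖ ^ 2 = ‖ev x‖ ^ 2 := by
  have hP1P : P * (1 - P) = 0 := by
    rw [Matrix.mul_sub, Matrix.mul_one, hPP, sub_self]
  have hcross : (P *ᵥ x) ⬝ᵥ ((1 - P) *ᵥ x) = 0 := by
    rw [← sym_dot P hPsym x ((1 - P) *ᵥ x)]
    rw [Matrix.mulVec_mulVec, hP1P, Matrix.zero_mulVec, dotProduct_zero]
  have hsplit : P *ᵥ x + (1 - P) *ᵥ x = x := by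
    rw [← Matrix.add_mulVec]
    simp
  rw [norm_ev_sq, norm_ev_sq, norm_ev_sq]
  have hexp : x ⬝ᵥ x = (P *ᵥ x) ⬝ᵥ (P *ᵥ x) + 2 * ((P *ᵥ x) ⬝ᵥ ((1 - P) *ᵥ x)) +
      ((1 - P) *ᵥ x) ⬝ᵥ ((1 - P) *ᵥ x) := by
    conv_lhs => rw [← hsplit]
    rw [add_dotProduct, dotProduct_add, dotProduct_add]
    rw [show ((1 - P) *ᵥ x) ⬝ᵥ (P *ᵥ x) = (P *ᵥ x) ⬝ᵥ ((1 - P) *ᵥ x) from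
      dotProduct_comm _ _]
    ring
  rw [hexp, hcross]
  ring

lemma proj_contract (P : Matrix (Fin n) (Fin n) ℝ) (hPsym : Pᵀ = P) (hPP : P * P = P)
    (x : Fin n → ℝ) : ‖ev (P *ᵥ x)‖ ≤ ‖ev x‖ := by
  have := proj_pyth P hPsym hPP x
  refine sq_le_imp (norm_nonneg _) ?_ (norm_nonneg _)
  nlinarith [sq_nonneg (‖ev ((1 - P) *ᵥ x)‖)]

lemma one_sub_sym (P : Matrix (Fin n) (Fin n) ℝ) (hPsym : Pᵀ = P) :
    (1 - P)ᵀ = 1 - P := by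
  rw [Matrix.transpose_sub, Matrix.transpose_one, hPsym]

lemma one_sub_idem (P : Matrix (Fin n) (Fin n) ℝ) (hPP : P * P = P) :
    (1 - P) * (1 - P) = 1 - P := by
  rw [Matrix.mul_sub, Matrix.sub_mul, Matrix.sub_mul, hPP, Matrix.mul_one, Matrix.one_mul,
    Matrix.mul_one]
  abel

lemma proj_comp_le_one (P Q : Matrix (Fin n) (Fin n) ℝ) (hPsym : Pᵀ = P) (hPP : P * P = P)
    (hQsym : Qᵀ = Q) (hQQ : Q * Q = Q) : specNorm ((1 - P) * Q) ≤ 1 := by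
  refine specNorm_le zero_le_one fun x => ?_
  rw [one_mul, ← Matrix.mulVec_mulVec x (1 - P) Q]
  calc ‖ev ((1 - P) *ᵥ (Q *ᵥ x))‖ ≤ ‖ev (Q *ᵥ x)‖ :=
        proj_contract (1 - P) (one_sub_sym P hPsym) (one_sub_idem P hPP) _
    _ ≤ ‖ev x‖ := proj_contract Q hQsym hQQ x

lemma proj_diff_le (P Q : Matrix (Fin n) (Fin n) ℝ) (hPsym : Pᵀ = P) (hPP : P * P = P)
    (hQsym : Qᵀ = Q) (hQQ : Q * Q = Q) :
    specNorm (Q - P) ≤ max (specNorm ((1 - P) * Q)) (specNorm ((1 - Q) * P)) := by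
  set m1 := specNorm ((1 - P) * Q) with hm1
  set m2 := specNorm ((1 - Q) * P) with hm2
  set m := max m1 m2 with hm
  have hm1n : 0 ≤ m1 := specNorm_nonneg _
  have hm2n : 0 ≤ m2 := specNorm_nonneg _
  have hmn : 0 ≤ m := le_max_of_le_left hm1n
  have hm2' : specNorm (P * (1 - Q)) = m2 := by
    rw [← specNorm_transpose, Matrix.transpose_mul, one_sub_sym Q hQsym, hPsym, hm2]
  refine specNorm_le hmn fun x => ?_
  set a := ((1 - P) * Q) *ᵥ x with ha
  set b := (P * (1 - Q)) *ᵥ x with hb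
  have hid : Q - P = (1 - P) * Q - P * (1 - Q) := by noncomm_ring
  have hab : (Q - P) *ᵥ x = a - b := by rw [hid, Matrix.sub_mulVec]
  have hP0 : P * ((1 - P) * Q) = 0 := by
    rw [← Matrix.mul_assoc, Matrix.mul_sub, Matrix.mul_one, hPP, sub_self, Matrix.zero_mul]
  have horth : a ⬝ᵥ b = 0 := by
    rw [ha, hb, ← Matrix.mulVec_mulVec x P (1 - Q), sym_dot P hPsym,
      Matrix.mulVec_mulVec, hP0, Matrix.zero_mulVec, zero_dotProduct]
  have hasq : ‖ev a‖ ≤ m1 * ‖ev (Q *ᵥ x)‖ := by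
    have : a = ((1 - P) * Q) *ᵥ (Q *ᵥ x) := by
      rw [Matrix.mulVec_mulVec, Matrix.mul_assoc, hQQ, ha]
    rw [this]
    exact norm_mulVec_le _ _
  have hbsq : ‖ev b‖ ≤ m2 * ‖ev ((1 - Q) *ᵥ x)‖ := by
    have : b = (P * (1 - Q)) *ᵥ ((1 - Q) *ᵥ x) := by
      rw [Matrix.mulVec_mulVec, Matrix.mul_assoc, one_sub_idem Q hQQ, hb]
    rw [this, ← hm2']
    exact norm_mulVec_le _ _
  have hpyth : ‖ev (Q *ᵥ x)‖ ^ 2 + ‖ev ((1 - Q) *ᵥ x)‖ ^ 2 = ‖ev x‖ ^ 2 :=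
    proj_pyth Q hQsym hQQ x
  have habn : ‖ev (a - b)‖ ^ 2 = ‖ev a‖ ^ 2 + ‖ev b‖ ^ 2 := by
    rw [norm_ev_sq, norm_ev_sq, norm_ev_sq, sub_dotProduct, dotProduct_sub,
      dotProduct_sub,
      show b ⬝ᵥ a = a ⬝ᵥ b from dotProduct_comm _ _, horth]
    ring
  have hfin : ‖ev ((Q - P) *ᵥ x)‖ ^ 2 ≤ (m * ‖ev x‖) ^ 2 := by
    rw [hab, habn]
    have h1 : ‖ev a‖ ^ 2 ≤ m1 ^ 2 * ‖ev (Q *ᵥ x)‖ ^ 2 := by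
      nlinarith [norm_nonneg (ev a), norm_nonneg (ev (Q *ᵥ x))]
    have h2 : ‖ev b‖ ^ 2 ≤ m2 ^ 2 * ‖ev ((1 - Q) *ᵥ x)‖ ^ 2 := by
      nlinarith [norm_nonneg (ev b), norm_nonneg (ev ((1 - Q) *ᵥ x))]
    have hm1m : m1 ^ 2 ≤ m ^ 2 := by nlinarith [le_max_left m1 m2]
    have hm2m : m2 ^ 2 ≤ m ^ 2 := by nlinarith [le_max_right m1 m2]
    nlinarith [sq_nonneg (‖ev (Q *ᵥ x)‖), sq_nonneg (‖ev ((1 - Q) *ᵥ x)‖),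
      sq_nonneg (‖ev x‖)]
  exact sq_le_imp (mul_nonneg hmn (norm_nonneg _)) hfin (norm_nonneg _)

end Proj

end DKAux

open DKAux

/-- **Davis–Kahan.**  Let `A` and `Ã = A + E` be `n × n` real symmetric matrices,
with spectral decompositions `A = ∑_{i=1}^n λ_i u_i u_iᵀ` and
`Ã = ∑_{i=1}^n λ̃_i ũ_i ũ_iᵀ` (eigenvalues ordered decreasingly, eigenvectors orthonormal).
If `δ_p := λ_p − λ_{p+1} > 0`, then the orthogonal projections
`Π_p = ∑_{i=1}^p u_i u_iᵀ` and `Π̃_p = ∑_{i=1}^p ũ_i ũ_iᵀ` onto the leading `p`-dimensional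
eigenspaces satisfy `‖Π̃_p − Π_p‖ ≤ 2 ‖E‖ / δ_p`. -/
theorem davis_kahan {n : ℕ} (A E : Matrix (Fin n) (Fin n) ℝ)
    (p : ℕ) (hp1 : 1 ≤ p) (hpn : p + 1 ≤ n)
    (lamA : ℕ → ℝ) (u : ℕ → Fin n → ℝ)
    (lamB : ℕ → ℝ) (w : ℕ → Fin n → ℝ)
    (hAdec : ∀ i ∈ Finset.Icc 1 n, ∀ j ∈ Finset.Icc 1 n, i ≤ j → lamA j ≤ lamA i)
    (hAon : ∀ i ∈ Finset.Icc 1 n, ∀ j ∈ Finset.Icc 1 n,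
      u i ⬝ᵥ u j = if i = j then 1 else 0)
    (hAeq : A = ∑ i ∈ Finset.Icc 1 n, lamA i • Matrix.vecMulVec (u i) (u i))
    (hBdec : ∀ i ∈ Finset.Icc 1 n, ∀ j ∈ Finset.Icc 1 n, i ≤ j → lamB j ≤ lamB i)
    (hBon : ∀ i ∈ Finset.Icc 1 n, ∀ j ∈ Finset.Icc 1 n,
      w i ⬝ᵥ w j = if i = j then 1 else 0)
    (hBeq : A + E = ∑ i ∈ Finset.Icc 1 n, lamB i • Matrix.vecMulVec (w i) (w i))
    (hgap : 0 < lamA p - lamA (p + 1)) :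
    specNorm
        ((∑ i ∈ Finset.Icc 1 p, Matrix.vecMulVec (w i) (w i)) -
          (∑ i ∈ Finset.Icc 1 p, Matrix.vecMulVec (u i) (u i))) ≤
      2 * specNorm E / (lamA p - lamA (p + 1)) := by
  set δ := lamA p - lamA (p + 1) with hδdef
  set ε := specNorm E with hεdef
  have hεn : 0 ≤ ε := specNorm_nonneg E
  have hpn' : p ≤ n := by omega
  have hpIcc : p ∈ Finset.Icc 1 n := by simp only [Finset.mem_Icc]; omega
  have hp1Icc : p + 1 ∈ Finset.Icc 1 n := by simp only [Finset.mem_Icc]; omega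
  have hsub : Finset.Icc 1 p ⊆ Finset.Icc 1 n := Finset.Icc_subset_Icc le_rfl hpn'
  set P := ∑ i ∈ Finset.Icc 1 p, Matrix.vecMulVec (u i) (u i) with hPdef
  set Q := ∑ i ∈ Finset.Icc 1 p, Matrix.vecMulVec (w i) (w i) with hQdef
  have hP1 : P = ∑ i ∈ Finset.Icc 1 p, (1:ℝ) • Matrix.vecMulVec (u i) (u i) := by
    simp [hPdef]
  have hQ1 : Q = ∑ i ∈ Finset.Icc 1 p, (1:ℝ) • Matrix.vecMulVec (w i) (w i) := by
    simp [hQdef]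
  have hPsym : Pᵀ = P := by
    rw [hPdef, Matrix.transpose_sum]
    exact Finset.sum_congr rfl fun i _ => vv_transpose _ _
  have hQsym : Qᵀ = Q := by
    rw [hQdef, Matrix.transpose_sum]
    exact Finset.sum_congr rfl fun i _ => vv_transpose _ _
  have hPP : P * P = P := by
    have h := sum_vv_mul_sum_vv u hAon _ _ hsub hsub (fun _ => (1:ℝ)) (fun _ => (1:ℝ))
    simp only [one_smul, one_mul, Finset.inter_self] at h
    rw [hPdef]; exact h
  have hQQ : Q * Q = Q := by
    have h := sum_vv_mul_sum_vv w hBon _ _ hsub hsub (fun _ => (1:ℝ)) (fun _ => (1:ℝ))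
    simp only [one_smul, one_mul, Finset.inter_self] at h
    rw [hQdef]; exact h
  have hinter1 : Finset.Icc 1 n ∩ Finset.Icc 1 p = Finset.Icc 1 p :=
    Finset.inter_eq_right.mpr hsub
  have hinter2 : Finset.Icc 1 p ∩ Finset.Icc 1 n = Finset.Icc 1 p :=
    Finset.inter_eq_left.mpr hsub
  have hAP : A * P = P * A := by
    have h1 := sum_vv_mul_sum_vv u hAon _ _ Finset.Subset.rfl hsub lamA (fun _ => (1:ℝ))
    have h2 := sum_vv_mul_sum_vv u hAon _ _ hsub Finset.Subset.rfl (fun _ => (1:ℝ)) lamA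
    simp only [one_smul, mul_one, one_mul, hinter1, hinter2] at h1 h2
    rw [hPdef, hAeq, h1, h2]
  have hBQ : (A + E) * Q = Q * (A + E) := by
    have h1 := sum_vv_mul_sum_vv w hBon _ _ Finset.Subset.rfl hsub lamB (fun _ => (1:ℝ))
    have h2 := sum_vv_mul_sum_vv w hBon _ _ hsub Finset.Subset.rfl (fun _ => (1:ℝ)) lamB
    simp only [one_smul, mul_one, one_mul, hinter1, hinter2] at h1 h2
    rw [hQdef, hBeq, h1, h2]
  have hα1 : ∀ y, P *ᵥ y = 0 → y ⬝ᵥ (A *ᵥ y) ≤ lamA (p + 1) * (y ⬝ᵥ y) := by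
    intro y hy
    refine rayleigh_upper u hAon lamA hAdec A hAeq (p + 1) hp1Icc y fun i hi hilt => ?_
    have := dot_proj u hAon p hpn' i hi y
    rw [hy, dotProduct_zero] at this
    have hmem : i ∈ Finset.Icc 1 p := by
      simp only [Finset.mem_Icc] at hi ⊢; omega
    rw [if_pos hmem] at this
    exact this.symm
  have hβ1 : ∀ z, Q *ᵥ z = z → lamB p * (z ⬝ᵥ z) ≤ z ⬝ᵥ ((A + E) *ᵥ z) := by
    intro z hz
    refine rayleigh_lower w hBon lamB hBdec (A + E) hBeq p hpIcc z fun j hj hjgt => ?_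
    have := dot_proj w hBon p hpn' j hj z
    rw [hz] at this
    rwa [if_neg (by simp only [Finset.mem_Icc]; omega)] at this
  have hα2 : ∀ y, Q *ᵥ y = 0 → y ⬝ᵥ ((A + E) *ᵥ y) ≤ lamB (p + 1) * (y ⬝ᵥ y) := by
    intro y hy
    refine rayleigh_upper w hBon lamB hBdec (A + E) hBeq (p + 1) hp1Icc y fun i hi hilt => ?_
    have := dot_proj w hBon p hpn' i hi y
    rw [hy, dotProduct_zero] at this
    have hmem : i ∈ Finset.Icc 1 p := by
      simp only [Finset.mem_Icc] at hi ⊢; omega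
    rw [if_pos hmem] at this
    exact this.symm
  have hβ2 : ∀ z, P *ᵥ z = z → lamA p * (z ⬝ᵥ z) ≤ z ⬝ᵥ (A *ᵥ z) := by
    intro z hz
    refine rayleigh_lower u hAon lamA hAdec A hAeq p hpIcc z fun j hj hjgt => ?_
    have := dot_proj u hAon p hpn' j hj z
    rw [hz] at this
    rwa [if_neg (by simp only [Finset.mem_Icc]; omega)] at this
  have hw1 : lamA p - ε ≤ lamB p :=
    weyl A E lamA u lamB w hAdec hAon hAeq hBdec hBon hBeq p hpIcc
  have hw2 : lamB (p + 1) - ε ≤ lamA (p + 1) := by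
    have hAeq' : (A + E) + (-E) = ∑ i ∈ Finset.Icc 1 n, lamA i • Matrix.vecMulVec (u i) (u i) := by
      rw [add_neg_cancel_right]; exact hAeq
    have := weyl (A + E) (-E) lamB w lamA u hBdec hBon hBeq hAdec hAon hAeq' (p + 1) hp1Icc
    rwa [specNorm_neg] at this
  have hdiff := proj_diff_le P Q hPsym hPP hQsym hQQ
  rcases le_or_gt δ (2 * ε) with hcase | hcase
  · have h1 : (1:ℝ) ≤ 2 * ε / δ := by
      rw [le_div_iff₀ hgap]; linarith
    have hmax : max (specNorm ((1 - P) * Q)) (specNorm ((1 - Q) * P)) ≤ 1 :=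
      max_le (proj_comp_le_one P Q hPsym hPP hQsym hQQ)
        (proj_comp_le_one Q P hQsym hQQ hPsym hPP)
    linarith
  · have hγ : 0 < δ - ε := by linarith
    have hb1 : lamA (p + 1) < lamB p := by linarith
    have hb2 : lamB (p + 1) < lamA p := by linarith
    have hm1 := sintheta A (A + E) P Q (lamA (p + 1)) (lamB p)
      hPsym hPP hQsym hQQ hAP hBQ hα1 hβ1 hb1
    rw [add_sub_cancel_left] at hm1
    have hm2 := sintheta (A + E) A Q P (lamB (p + 1)) (lamA p)
      hQsym hQQ hPsym hPP hBQ hAP hα2 hβ2 hb2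
    rw [show A - (A + E) = -E by abel, specNorm_neg] at hm2
    have hc1 : 0 < lamB p - lamA (p + 1) := by linarith
    have hc2 : 0 < lamA p - lamB (p + 1) := by linarith
    have hd1 : ε / (lamB p - lamA (p + 1)) ≤ 2 * ε / δ := by
      rw [div_le_div_iff₀ hc1 hgap]
      nlinarith
    have hd2 : ε / (lamA p - lamB (p + 1)) ≤ 2 * ε / δ := by
      rw [div_le_div_iff₀ hc2 hgap]
      nlinarith
    have hmax : max (specNorm ((1 - P) * Q)) (specNorm ((1 - Q) * P)) ≤ 2 * ε / δ :=
      max_le (le_trans hm1 hd1) (le_trans hm2 hd2)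
    linarith
end

section
/- Let Γ be the circle of center c ∈ ℂ and radius R > 0. Let a_1, …, a_l, a_{l+1}, …, a_m (1 ≤ l < m) be pairwise distinct points in ℂ such that X = {a_1,…,a_l} are inside Γ and Y = {a_{l+1},…,a_m} are outside Γ. Let t_1,…,t_m be nonnegative integers, s := ∑_{i=1}^m t_i, t := t_m, δ := min_{i ≤ l < j} |a_i − a_j|, and λ := min_{i ≤ l} |a_i − a_m|. Then |(1/(2πi)) ∮_Γ dz/∏_{i=1}^m (z − a_i)^{t_i}| ≤ 2^{s−1}/(λ^t δ^{s−t−1}). -/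
open Complex



open Metric

lemma arith1 {δ lam : ℝ} (hδ : 0 < δ) (hdl : δ ≤ lam) (s tm : ℤ) :
    lam⁻¹ * (2 ^ (s - 2) / (lam ^ (tm - 1) * δ ^ (s - tm - 1)) +
        2 ^ (s - 2) / (lam ^ tm * δ ^ (s - tm - 2))) ≤
      2 ^ (s - 1) / (lam ^ tm * δ ^ (s - tm - 1)) := by
  have hlam : 0 < lam := hδ.trans_le hdl
  have h2 : (2 : ℝ) ^ (s - 1) = 2 * 2 ^ (s - 2) := by
    rw [show s - 1 = 1 + (s - 2) by ring, zpow_add₀ (by norm_num : (2:ℝ) ≠ 0), zpow_one]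
  have e1 : lam⁻¹ * (2 ^ (s - 2) / (lam ^ (tm - 1) * δ ^ (s - tm - 1))) =
      2 ^ (s - 2) / (lam ^ tm * δ ^ (s - tm - 1)) := by
    rw [inv_mul_eq_div, div_div, show lam ^ (tm - 1) * δ ^ (s - tm - 1) * lam
        = (lam ^ (tm - 1) * lam) * δ ^ (s - tm - 1) by ring,
      ← zpow_add_one₀ hlam.ne', sub_add_cancel]
  have e2 : lam⁻¹ * (2 ^ (s - 2) / (lam ^ tm * δ ^ (s - tm - 2))) ≤
      2 ^ (s - 2) / (lam ^ tm * δ ^ (s - tm - 1)) := by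
    rw [inv_mul_eq_div, div_div]
    apply div_le_div_of_nonneg_left (by positivity) (by positivity)
    calc lam ^ tm * δ ^ (s - tm - 1) = lam ^ tm * δ ^ (s - tm - 2) * δ := by
          rw [show s - tm - 1 = (s - tm - 2) + 1 by ring, zpow_add_one₀ hδ.ne']; ring
      _ ≤ lam ^ tm * δ ^ (s - tm - 2) * lam := by
          apply mul_le_mul_of_nonneg_left hdl (by positivity)
  calc lam⁻¹ * (2 ^ (s - 2) / (lam ^ (tm - 1) * δ ^ (s - tm - 1)) +
        2 ^ (s - 2) / (lam ^ tm * δ ^ (s - tm - 2)))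
      = lam⁻¹ * (2 ^ (s - 2) / (lam ^ (tm - 1) * δ ^ (s - tm - 1))) +
        lam⁻¹ * (2 ^ (s - 2) / (lam ^ tm * δ ^ (s - tm - 2))) := by ring
    _ ≤ 2 ^ (s - 2) / (lam ^ tm * δ ^ (s - tm - 1)) +
        2 ^ (s - 2) / (lam ^ tm * δ ^ (s - tm - 1)) := by rw [e1]; gcongr
    _ = 2 ^ (s - 1) / (lam ^ tm * δ ^ (s - tm - 1)) := by rw [h2]; ring

lemma arith2 {δ : ℝ} (hδ : 0 < δ) (s : ℤ) :
    δ⁻¹ * (2 ^ (s - 2) / δ ^ (s - 2) + 2 ^ (s - 2) / δ ^ (s - 2)) ≤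
      2 ^ (s - 1) / δ ^ (s - 1) := by
  have h2 : (2 : ℝ) ^ (s - 1) = 2 * 2 ^ (s - 2) := by
    rw [show s - 1 = 1 + (s - 2) by ring, zpow_add₀ (by norm_num : (2:ℝ) ≠ 0), zpow_one]
  have e1 : δ ^ (s - 1) = δ ^ (s - 2) * δ := by
    rw [show s - 1 = (s - 2) + 1 by ring, zpow_add_one₀ hδ.ne']
  rw [h2, e1]
  rw [div_mul_eq_div_div]
  field_simp
  ring_nf
  exact le_refl _

lemma prodne {m : ℕ} (a : ℕ → ℂ) (t : ℕ → ℕ) {z : ℂ}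
    (hz : ∀ k ∈ Finset.Icc 1 m, (z - a k) ^ t k ≠ 0) :
    (∏ i ∈ Finset.Icc 1 m, (z - a i) ^ t i) ≠ 0 :=
  Finset.prod_ne_zero_iff.2 hz

lemma prod_update {m : ℕ} (a : ℕ → ℂ) (t : ℕ → ℕ) (z : ℂ) {j : ℕ}
    (hj : j ∈ Finset.Icc 1 m) (htj : t j ≠ 0) :
    (∏ k ∈ Finset.Icc 1 m, (z - a k) ^ (Function.update t j (t j - 1)) k) * (z - a j) =
      ∏ k ∈ Finset.Icc 1 m, (z - a k) ^ t k := by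
  rw [← Finset.mul_prod_erase _ (fun k => (z - a k) ^ (Function.update t j (t j - 1)) k) hj,
    ← Finset.mul_prod_erase _ (fun k => (z - a k) ^ t k) hj]
  have he : (∏ k ∈ (Finset.Icc 1 m).erase j, (z - a k) ^ (Function.update t j (t j - 1)) k) =
      ∏ k ∈ (Finset.Icc 1 m).erase j, (z - a k) ^ t k :=
    Finset.prod_congr rfl fun k hk => by
      rw [Function.update_of_ne (Finset.ne_of_mem_erase hk)]
  rw [he, Function.update_self, mul_right_comm, ← pow_succ]
  congr 2
  omega

-- pointwise identity
lemma pointwise {m : ℕ} (a : ℕ → ℂ) (t : ℕ → ℕ) {z : ℂ} {i j : ℕ}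
    (hi : i ∈ Finset.Icc 1 m) (hj : j ∈ Finset.Icc 1 m)
    (hti : t i ≠ 0) (htj : t j ≠ 0) (hij : a i ≠ a j)
    (hz : ∀ k ∈ Finset.Icc 1 m, z ≠ a k) :
    (∏ k ∈ Finset.Icc 1 m, (z - a k) ^ t k)⁻¹ =
      (a i - a j)⁻¹ *
        ((∏ k ∈ Finset.Icc 1 m, (z - a k) ^ (Function.update t j (t j - 1)) k)⁻¹ -
         (∏ k ∈ Finset.Icc 1 m, (z - a k) ^ (Function.update t i (t i - 1)) k)⁻¹) := by
  have hne : ∀ u : ℕ → ℕ, (∏ k ∈ Finset.Icc 1 m, (z - a k) ^ u k) ≠ 0 := fun u =>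
    prodne a u fun k hk => pow_ne_zero _ (sub_ne_zero.2 (hz k hk))
  have hzj : z - a j ≠ 0 := sub_ne_zero.2 (hz j hj)
  have hzi : z - a i ≠ 0 := sub_ne_zero.2 (hz i hi)
  have h1 : (∏ k ∈ Finset.Icc 1 m, (z - a k) ^ (Function.update t j (t j - 1)) k) =
      (∏ k ∈ Finset.Icc 1 m, (z - a k) ^ t k) / (z - a j) :=
    eq_div_iff hzj |>.2 (prod_update a t z hj htj)
  have h2 : (∏ k ∈ Finset.Icc 1 m, (z - a k) ^ (Function.update t i (t i - 1)) k) =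
      (∏ k ∈ Finset.Icc 1 m, (z - a k) ^ t k) / (z - a i) :=
    eq_div_iff hzi |>.2 (prod_update a t z hi hti)
  rw [h1, h2, inv_div, inv_div, div_sub_div_same,
    show z - a j - (z - a i) = a i - a j by ring, div_eq_mul_inv, ← mul_assoc,
    inv_mul_cancel₀ (sub_ne_zero.2 hij), one_mul]

lemma contOn {m : ℕ} (a : ℕ → ℂ) (t : ℕ → ℕ) {s : Set ℂ}
    (hz : ∀ z ∈ s, ∀ k ∈ Finset.Icc 1 m, (z - a k) ^ t k ≠ 0) :
    ContinuousOn (fun z => (∏ i ∈ Finset.Icc 1 m, (z - a i) ^ t i)⁻¹) s := by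
  apply ContinuousOn.inv₀
  · exact Continuous.continuousOn (by
      apply continuous_finset_prod
      intro i _
      exact (continuous_id.sub continuous_const).pow _)
  · exact fun z hzs => Finset.prod_ne_zero_iff.2 (hz z hzs)

lemma diffAt {m : ℕ} (a : ℕ → ℂ) (t : ℕ → ℕ) {z : ℂ}
    (hz : ∀ k ∈ Finset.Icc 1 m, (z - a k) ^ t k ≠ 0) :
    DifferentiableAt ℂ (fun z => (∏ i ∈ Finset.Icc 1 m, (z - a i) ^ t i)⁻¹) z := by
  apply DifferentiableAt.inv
  · exact DifferentiableAt.fun_finsetProd fun i _ =>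
      ((differentiableAt_id.sub_const _).pow _)
  · exact Finset.prod_ne_zero_iff.2 hz

lemma sphere_ne {m l : ℕ} (hlm : l < m) {c : ℂ} {R : ℝ} (a : ℕ → ℂ)
    (hin : ∀ i ∈ Finset.Icc 1 l, ‖a i - c‖ < R)
    (hout : ∀ j ∈ Finset.Icc (l + 1) m, R < ‖a j - c‖)
    {z : ℂ} (hz : z ∈ sphere c R) : ∀ k ∈ Finset.Icc 1 m, z ≠ a k := by
  intro k hk h
  have hzc : ‖z - c‖ = R := by
    simpa [Complex.dist_eq] using hz
  rw [Finset.mem_Icc] at hk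
  rcases le_or_gt k l with hkl | hkl
  · exact absurd (h ▸ hzc) (ne_of_gt (by
      simpa [← h] using hin k (Finset.mem_Icc.2 ⟨hk.1, hkl⟩))).symm
  · exact absurd (h ▸ hzc) (ne_of_lt (by
      simpa [← h] using hout k (Finset.mem_Icc.2 ⟨hkl, hk.2⟩))).symm

lemma step_int {m l : ℕ} (hlm : l < m) (c : ℂ) {R : ℝ} (hR : 0 < R) (a : ℕ → ℂ)
    (hin : ∀ i ∈ Finset.Icc 1 l, ‖a i - c‖ < R)
    (hout : ∀ j ∈ Finset.Icc (l + 1) m, R < ‖a j - c‖)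
    (t : ℕ → ℕ) {i j : ℕ} (hi : i ∈ Finset.Icc 1 l) (hj : j ∈ Finset.Icc (l + 1) m)
    (hti : t i ≠ 0) (htj : t j ≠ 0) :
    (∮ z in C(c, R), (∏ k ∈ Finset.Icc 1 m, (z - a k) ^ t k)⁻¹) =
      (a i - a j)⁻¹ *
        ((∮ z in C(c, R), (∏ k ∈ Finset.Icc 1 m,
            (z - a k) ^ (Function.update t j (t j - 1)) k)⁻¹) -
         (∮ z in C(c, R), (∏ k ∈ Finset.Icc 1 m,
            (z - a k) ^ (Function.update t i (t i - 1)) k)⁻¹)) := by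
  have hiS : i ∈ Finset.Icc 1 m := by
    rw [Finset.mem_Icc] at hi ⊢; omega
  have hjS : j ∈ Finset.Icc 1 m := by
    rw [Finset.mem_Icc] at hj ⊢; omega
  have hij : a i ≠ a j := fun h => absurd (h ▸ hin i hi) (not_lt.2 (hout j hj).le)
  have hzk : ∀ z ∈ sphere c R, ∀ k ∈ Finset.Icc 1 m, (z - a k) ^ t k ≠ 0 := fun z hz k hk =>
    pow_ne_zero _ (sub_ne_zero.2 (sphere_ne hlm a hin hout hz k hk))
  have hint : ∀ u : ℕ → ℕ, CircleIntegrable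
      (fun z => (∏ k ∈ Finset.Icc 1 m, (z - a k) ^ u k)⁻¹) c R := fun u =>
    (contOn a u fun z hz k hk =>
      pow_ne_zero _ (sub_ne_zero.2 (sphere_ne hlm a hin hout hz k hk))).circleIntegrable hR.le
  calc (∮ z in C(c, R), (∏ k ∈ Finset.Icc 1 m, (z - a k) ^ t k)⁻¹)
      = ∮ z in C(c, R), (a i - a j)⁻¹ •
          ((∏ k ∈ Finset.Icc 1 m, (z - a k) ^ (Function.update t j (t j - 1)) k)⁻¹ -
           (∏ k ∈ Finset.Icc 1 m, (z - a k) ^ (Function.update t i (t i - 1)) k)⁻¹) := by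
        apply circleIntegral.integral_congr hR.le
        intro z hz
        simp only [smul_eq_mul]
        exact pointwise a t hiS hjS hti htj hij (sphere_ne hlm a hin hout hz)
    _ = (a i - a j)⁻¹ •
          ∮ z in C(c, R),
            ((∏ k ∈ Finset.Icc 1 m, (z - a k) ^ (Function.update t j (t j - 1)) k)⁻¹ -
             (∏ k ∈ Finset.Icc 1 m, (z - a k) ^ (Function.update t i (t i - 1)) k)⁻¹) :=
        circleIntegral.integral_smul _ _ _ _
    _ = _ := by
        rw [circleIntegral.integral_sub (hint _) (hint _), smul_eq_mul]

theorem aux {m l : ℕ} (hl1 : 1 ≤ l) (hlm : l < m) (c : ℂ) {R : ℝ} (hR : 0 < R) (a : ℕ → ℂ)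
    (hin : ∀ i ∈ Finset.Icc 1 l, ‖a i - c‖ < R)
    (hout : ∀ j ∈ Finset.Icc (l + 1) m, R < ‖a j - c‖)
    {δ lam : ℝ} (hδ0 : 0 < δ) (hdl : δ ≤ lam)
    (hδ : ∀ i ∈ Finset.Icc 1 l, ∀ j ∈ Finset.Icc (l + 1) m, δ ≤ ‖a i - a j‖)
    (hlamle : ∀ i ∈ Finset.Icc 1 l, lam ≤ ‖a i - a m‖) :
    ∀ s : ℕ, ∀ t : ℕ → ℕ, (∑ i ∈ Finset.Icc 1 m, t i) = s →
    ‖(2 * (Real.pi : ℂ) * Complex.I)⁻¹ *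
        (∮ z in C(c, R), (∏ i ∈ Finset.Icc 1 m, (z - a i) ^ t i)⁻¹)‖ ≤
      2 ^ ((s : ℤ) - 1) / (lam ^ (t m : ℤ) * δ ^ ((s : ℤ) - (t m : ℤ) - 1)) := by
  have hlam : 0 < lam := hδ0.trans_le hdl
  have hmOut : m ∈ Finset.Icc (l + 1) m := Finset.mem_Icc.2 ⟨hlm, le_refl m⟩
  have hunion : Finset.Icc 1 l ∪ Finset.Icc (l + 1) m = Finset.Icc 1 m := by
    ext x; simp only [Finset.mem_union, Finset.mem_Icc]; omega
  have hdisj : Disjoint (Finset.Icc 1 l) (Finset.Icc (l + 1) m) := by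
    rw [Finset.disjoint_left]; intro x hx hx'
    rw [Finset.mem_Icc] at hx hx'; omega
  intro s
  induction s using Nat.strong_induction_on with
  | _ s IH =>
  intro t hts
  have hsplit : (∑ i ∈ Finset.Icc 1 l, t i) + (∑ i ∈ Finset.Icc (l + 1) m, t i) = s := by
    rw [← Finset.sum_union hdisj, hunion, hts]
  have hRHS0 : (0:ℝ) < 2 ^ ((s : ℤ) - 1) / (lam ^ (t m : ℤ) * δ ^ ((s : ℤ) - (t m : ℤ) - 1)) := by
    positivity
  by_cases hsin : (∑ i ∈ Finset.Icc 1 l, t i) = 0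
  · -- Case A : no poles inside, integral is zero
    have hne : ∀ z ∈ closedBall c R, ∀ k ∈ Finset.Icc 1 m, (z - a k) ^ t k ≠ 0 := by
      intro z hz k hk
      rcases le_or_gt k l with hkl | hkl
      · have ht0 : t k = 0 :=
          Finset.sum_eq_zero_iff.1 hsin k (Finset.mem_Icc.2 ⟨(Finset.mem_Icc.1 hk).1, hkl⟩)
        simp [ht0]
      · apply pow_ne_zero
        apply sub_ne_zero.2
        intro h
        have h1 : ‖z - c‖ ≤ R := by
          simpa [Complex.dist_eq] using hz
        have h2 := hout k (Finset.mem_Icc.2 ⟨hkl, (Finset.mem_Icc.1 hk).2⟩)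
        rw [h] at h1
        exact absurd h1 (not_le.2 h2)
    have hzero : (∮ z in C(c, R), (∏ i ∈ Finset.Icc 1 m, (z - a i) ^ t i)⁻¹) = 0 := by
      apply circleIntegral_eq_zero_of_differentiable_on_off_countable hR.le Set.countable_empty
        (contOn a t hne)
      intro z hz
      exact diffAt a t (hne z (ball_subset_closedBall hz.1))
    rw [hzero, mul_zero, norm_zero]
    exact hRHS0.le
  · by_cases hsout : (∑ i ∈ Finset.Icc (l + 1) m, t i) = 0
    · -- Case C : all poles inside
      have htm0 : t m = 0 := Finset.sum_eq_zero_iff.1 hsout m hmOut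
      have hsin_s : (∑ i ∈ Finset.Icc 1 l, t i) = s := by omega
      rcases Nat.lt_or_ge s 2 with hs2 | hs2
      · -- s = 1 : single simple pole inside, integral is 2πi
        have hs1 : s = 1 := by omega
        obtain ⟨i, hiIn, hti⟩ := Finset.exists_ne_zero_of_sum_ne_zero hsin
        have hti1 : t i = 1 := by
          have h1 : t i ≤ ∑ i ∈ Finset.Icc 1 l, t i :=
            Finset.single_le_sum (fun _ _ => Nat.zero_le _) hiIn
          omega
        have hothers : ∀ k ∈ Finset.Icc 1 m, k ≠ i → t k = 0 := by
          intro k hk hki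
          rcases le_or_gt k l with hkl | hkl
          · have hkIn : k ∈ Finset.Icc 1 l := Finset.mem_Icc.2 ⟨(Finset.mem_Icc.1 hk).1, hkl⟩
            have h2 := Finset.add_sum_erase _ t hiIn
            have h0 : ∑ x ∈ (Finset.Icc 1 l).erase i, t x = 0 := by omega
            exact Finset.sum_eq_zero_iff.1 h0 k (Finset.mem_erase.2 ⟨hki, hkIn⟩)
          · exact Finset.sum_eq_zero_iff.1 hsout k
              (Finset.mem_Icc.2 ⟨hkl, (Finset.mem_Icc.1 hk).2⟩)
        have hiS : i ∈ Finset.Icc 1 m := by rw [Finset.mem_Icc] at hiIn ⊢; omega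
        have hprod : ∀ z : ℂ, (∏ k ∈ Finset.Icc 1 m, (z - a k) ^ t k) = z - a i := by
          intro z
          rw [Finset.prod_eq_single i (fun k hk hki => by rw [hothers k hk hki, pow_zero])
            (fun h => absurd hiS h), hti1, pow_one]
        have hval : (∮ z in C(c, R), (∏ i ∈ Finset.Icc 1 m, (z - a i) ^ t i)⁻¹)
            = 2 * (Real.pi : ℂ) * Complex.I := by
          have h1 : (∮ z in C(c, R), (∏ i ∈ Finset.Icc 1 m, (z - a i) ^ t i)⁻¹)
              = ∮ z in C(c, R), (z - a i)⁻¹ :=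
            circleIntegral.integral_congr hR.le fun z _ => by simp [hprod z]
          rw [h1]
          exact circleIntegral.integral_sub_inv_of_mem_ball
            (by simpa [mem_ball, Complex.dist_eq] using hin i hiIn)
        have h2pine : (2 * (Real.pi : ℂ) * Complex.I) ≠ 0 := by
          simp [Real.pi_ne_zero, Complex.I_ne_zero, Complex.ofReal_ne_zero]
        rw [hval, inv_mul_cancel₀ h2pine, norm_one, hs1, htm0]
        norm_num
      · -- s ≥ 2 : integral vanishes (expand the contour)
        have hne : ∀ z : ℂ, R ≤ ‖z - c‖ →
            ∀ k ∈ Finset.Icc 1 m, (z - a k) ^ t k ≠ 0 := by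
          intro z hz k hk
          rcases le_or_gt k l with hkl | hkl
          · apply pow_ne_zero
            apply sub_ne_zero.2
            intro h
            have h1 := hin k (Finset.mem_Icc.2 ⟨(Finset.mem_Icc.1 hk).1, hkl⟩)
            rw [← h] at h1
            exact absurd hz (not_le.2 h1)
          · have ht0 : t k = 0 := Finset.sum_eq_zero_iff.1 hsout k
              (Finset.mem_Icc.2 ⟨hkl, (Finset.mem_Icc.1 hk).2⟩)
            simp [ht0]
        have key : ∀ u : ℝ, 1 ≤ u →
            ‖(2 * (Real.pi : ℂ) * Complex.I)⁻¹ *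
              (∮ z in C(c, R), (∏ i ∈ Finset.Icc 1 m, (z - a i) ^ t i)⁻¹)‖ ≤
            (R + u) / u ^ 2 := by
          intro u hu
          have hu0 : (0:ℝ) < u := by linarith
          have heq : (∮ z in C(c, R), (∏ i ∈ Finset.Icc 1 m, (z - a i) ^ t i)⁻¹)
              = ∮ z in C(c, R + u), (∏ i ∈ Finset.Icc 1 m, (z - a i) ^ t i)⁻¹ := by
            refine (circleIntegral_eq_of_differentiable_on_annulus_off_countable hR
              (by linarith : R ≤ R + u) Set.countable_empty ?_ ?_).symm
            · apply contOn
              intro z hz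
              apply hne
              have h3 : ¬ (dist z c < R) := fun h => hz.2 (mem_ball.2 h)
              rw [Complex.dist_eq] at h3
              exact not_lt.1 h3
            · intro z hz
              apply diffAt
              apply hne
              have h3 : ¬ (dist z c ≤ R) := fun h => hz.1.2 (mem_closedBall.2 h)
              rw [Complex.dist_eq] at h3
              exact (not_le.1 h3).le
          have hb : ∀ z ∈ sphere c (R + u),
              ‖(∏ i ∈ Finset.Icc 1 m, (z - a i) ^ t i)⁻¹‖ ≤ (u ^ 2)⁻¹ := by
            intro z hz
            have hzc : ‖z - c‖ = R + u := by simpa [Complex.dist_eq] using hz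
            have hdist : ∀ i ∈ Finset.Icc 1 l, u ≤ ‖z - a i‖ := by
              intro i hi
              have h1 := hin i hi
              have h2 : ‖z - c‖ - ‖a i - c‖ ≤ ‖z - a i‖ := by
                simpa [sub_sub_sub_cancel_right] using
                  norm_sub_norm_le (z - c) (a i - c)
              rw [hzc] at h2
              linarith
            have hsplitP : (∏ k ∈ Finset.Icc 1 m, (z - a k) ^ t k)
                = ∏ k ∈ Finset.Icc 1 l, (z - a k) ^ t k := by
              have hout1 : (∏ k ∈ Finset.Icc (l + 1) m, (z - a k) ^ t k) = 1 :=
                Finset.prod_eq_one fun k hk => by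
                  rw [Finset.sum_eq_zero_iff.1 hsout k hk, pow_zero]
              rw [← hunion, Finset.prod_union hdisj, hout1, mul_one]
            have hge : u ^ 2 ≤ ∏ k ∈ Finset.Icc 1 l, ‖z - a k‖ ^ t k := by
              calc u ^ 2 ≤ u ^ s := pow_le_pow_right₀ hu hs2
                _ = ∏ k ∈ Finset.Icc 1 l, u ^ t k := by
                    rw [Finset.prod_pow_eq_pow_sum, hsin_s]
                _ ≤ ∏ k ∈ Finset.Icc 1 l, ‖z - a k‖ ^ t k :=
                    Finset.prod_le_prod (fun k _ => by positivity)
                      (fun k hk => pow_le_pow_left₀ hu0.le (hdist k hk) _)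
            rw [norm_inv, hsplitP]
            have habs : ‖∏ k ∈ Finset.Icc 1 l, (z - a k) ^ t k‖
                = ∏ k ∈ Finset.Icc 1 l, ‖z - a k‖ ^ t k := by
              simp only [norm_prod, norm_pow]
            rw [habs]
            exact inv_anti₀ (by positivity) hge
          have hnormle := circleIntegral.norm_integral_le_of_norm_le_const
            (by linarith : (0:ℝ) ≤ R + u) hb
          rw [heq, norm_mul]
          have h2pi : ‖(2 * (Real.pi : ℂ) * Complex.I)⁻¹‖ = (2 * Real.pi)⁻¹ := by
            have habs2 : ‖2 * (Real.pi : ℂ) * Complex.I‖ = 2 * Real.pi := by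
              simp [Complex.norm_real,
                _root_.abs_of_nonneg Real.pi_nonneg]
            rw [norm_inv, habs2]
          rw [h2pi]
          calc (2 * Real.pi)⁻¹ *
                ‖∮ z in C(c, R + u), (∏ i ∈ Finset.Icc 1 m, (z - a i) ^ t i)⁻¹‖
              ≤ (2 * Real.pi)⁻¹ * (2 * Real.pi * (R + u) * (u ^ 2)⁻¹) := by
                apply mul_le_mul_of_nonneg_left hnormle
                positivity
            _ = (R + u) / u ^ 2 := by
                rw [div_eq_mul_inv]
                field_simp [Real.pi_ne_zero]
        have hX0 : ‖(2 * (Real.pi : ℂ) * Complex.I)⁻¹ *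
            (∮ z in C(c, R), (∏ i ∈ Finset.Icc 1 m, (z - a i) ^ t i)⁻¹)‖ ≤ 0 := by
          by_contra hpos
          push_neg at hpos
          set X := ‖(2 * (Real.pi : ℂ) * Complex.I)⁻¹ *
            (∮ z in C(c, R), (∏ i ∈ Finset.Icc 1 m, (z - a i) ^ t i)⁻¹)‖ with hX
          have hdivpos : (0:ℝ) < 2 / X := by positivity
          have hu : (1:ℝ) ≤ 1 + R + 2 / X := by linarith
          have hb := key _ hu
          have hu0 : (0:ℝ) < 1 + R + 2 / X := by linarith
          rw [le_div_iff₀ (by positivity)] at hb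
          have hXu2 : X * (1 + R + 2 / X) = X + X * R + 2 := by
            field_simp
          have h5 : (X + X * R + 2) * (1 + R + 2 / X) = X * (1 + R + 2 / X) ^ 2 := by
            rw [← hXu2]; ring
          have h6 : (X + X * R + 2) * (1 + R + 2 / X) ≤ R + (1 + R + 2 / X) := by
            rw [h5]; exact hb
          nlinarith [mul_pos hpos hu0, mul_pos (mul_pos hpos hR) hu0]
        exact le_trans hX0 hRHS0.le
    · -- Case B : mixed poles
      obtain ⟨i, hiIn, hti⟩ := Finset.exists_ne_zero_of_sum_ne_zero hsin
      have hiS : i ∈ Finset.Icc 1 m := by rw [Finset.mem_Icc] at hiIn ⊢; omega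
      have him : i ≠ m := by rw [Finset.mem_Icc] at hiIn; omega
      have hs2 : 2 ≤ s := by
        obtain ⟨j0, hj0, htj0⟩ := Finset.exists_ne_zero_of_sum_ne_zero hsout
        have h1 : t i ≤ ∑ i ∈ Finset.Icc 1 l, t i :=
          Finset.single_le_sum (fun _ _ => Nat.zero_le _) hiIn
        have h2 : t j0 ≤ ∑ i ∈ Finset.Icc (l + 1) m, t i :=
          Finset.single_le_sum (fun _ _ => Nat.zero_le _) hj0
        omega
      have hsum_upd : ∀ k, k ∈ Finset.Icc 1 m → t k ≠ 0 →
          (∑ x ∈ Finset.Icc 1 m, (Function.update t k (t k - 1)) x) = s - 1 := by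
        intro k hk htk
        rw [Finset.sum_update_of_mem hk, Finset.sdiff_singleton_eq_erase]
        have h3 := Finset.add_sum_erase _ t hk
        omega
      have hcast1 : ((s - 1 : ℕ) : ℤ) = (s : ℤ) - 1 := by omega
      have hipos : (0:ℝ) ≤ (2:ℝ) ^ ((s:ℤ) - 2) := by positivity
      by_cases htm : t m = 0
      · -- pair i with some outside pole j ≠ m
        obtain ⟨j, hjOut, htj⟩ := Finset.exists_ne_zero_of_sum_ne_zero hsout
        have hjS : j ∈ Finset.Icc 1 m := by rw [Finset.mem_Icc] at hjOut ⊢; omega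
        have hjm : j ≠ m := fun h => htj (h ▸ htm)
        have hstep := step_int hlm c hR a hin hout t hiIn hjOut hti htj
        have hIH1 := IH (s - 1) (by omega) _ (hsum_upd j hjS htj)
        have hIH2 := IH (s - 1) (by omega) _ (hsum_upd i hiS hti)
        rw [Function.update_of_ne (Ne.symm hjm)] at hIH1
        rw [Function.update_of_ne (Ne.symm him)] at hIH2
        rw [hcast1] at hIH1 hIH2
        rw [htm] at hIH1 hIH2 ⊢
        simp only [Nat.cast_zero, zpow_zero, one_mul] at hIH1 hIH2 ⊢
        rw [show (s:ℤ) - 1 - 1 = (s:ℤ) - 2 by ring,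
          show (s:ℤ) - 1 - 0 - 1 = (s:ℤ) - 2 by ring] at hIH1 hIH2
        rw [show (s:ℤ) - 0 - 1 = (s:ℤ) - 1 by ring]
        rw [hstep, show (2 * (Real.pi:ℂ) * Complex.I)⁻¹ * ((a i - a j)⁻¹ *
            ((∮ z in C(c, R), (∏ k ∈ Finset.Icc 1 m,
                (z - a k) ^ (Function.update t j (t j - 1)) k)⁻¹) -
             (∮ z in C(c, R), (∏ k ∈ Finset.Icc 1 m,
                (z - a k) ^ (Function.update t i (t i - 1)) k)⁻¹)))
          = (a i - a j)⁻¹ * ((2 * (Real.pi:ℂ) * Complex.I)⁻¹ *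
              (∮ z in C(c, R), (∏ k ∈ Finset.Icc 1 m,
                (z - a k) ^ (Function.update t j (t j - 1)) k)⁻¹) -
            (2 * (Real.pi:ℂ) * Complex.I)⁻¹ *
              (∮ z in C(c, R), (∏ k ∈ Finset.Icc 1 m,
                (z - a k) ^ (Function.update t i (t i - 1)) k)⁻¹)) from by ring,
          norm_mul, norm_inv]
        have hd1 : ‖a i - a j‖⁻¹ ≤ δ⁻¹ := by
          apply inv_anti₀ hδ0
          exact hδ i hiIn j hjOut
        calc ‖a i - a j‖⁻¹ * ‖(2 * (Real.pi:ℂ) * Complex.I)⁻¹ *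
              (∮ z in C(c, R), (∏ k ∈ Finset.Icc 1 m,
                (z - a k) ^ (Function.update t j (t j - 1)) k)⁻¹) -
            (2 * (Real.pi:ℂ) * Complex.I)⁻¹ *
              (∮ z in C(c, R), (∏ k ∈ Finset.Icc 1 m,
                (z - a k) ^ (Function.update t i (t i - 1)) k)⁻¹)‖
            ≤ δ⁻¹ * (‖(2 * (Real.pi:ℂ) * Complex.I)⁻¹ *
              (∮ z in C(c, R), (∏ k ∈ Finset.Icc 1 m,
                (z - a k) ^ (Function.update t j (t j - 1)) k)⁻¹)‖ +
              ‖(2 * (Real.pi:ℂ) * Complex.I)⁻¹ *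
              (∮ z in C(c, R), (∏ k ∈ Finset.Icc 1 m,
                (z - a k) ^ (Function.update t i (t i - 1)) k)⁻¹)‖) :=
              mul_le_mul hd1 (norm_sub_le _ _) (norm_nonneg _) (inv_nonneg.2 hδ0.le)
          _ ≤ δ⁻¹ * (2 ^ ((s:ℤ) - 2) / δ ^ ((s:ℤ) - 2) +
                2 ^ ((s:ℤ) - 2) / δ ^ ((s:ℤ) - 2)) :=
              mul_le_mul_of_nonneg_left (add_le_add hIH1 hIH2) (inv_nonneg.2 hδ0.le)
          _ ≤ 2 ^ ((s:ℤ) - 1) / δ ^ ((s:ℤ) - 1) := arith2 hδ0 (s:ℤ)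
      · -- pair i with m
        have hmS : m ∈ Finset.Icc 1 m := by rw [Finset.mem_Icc]; omega
        have hstep := step_int hlm c hR a hin hout t hiIn hmOut hti htm
        have hIH1 := IH (s - 1) (by omega) _ (hsum_upd m hmS htm)
        have hIH2 := IH (s - 1) (by omega) _ (hsum_upd i hiS hti)
        rw [Function.update_self] at hIH1
        rw [Function.update_of_ne (Ne.symm him)] at hIH2
        rw [hcast1] at hIH1 hIH2
        have hcast2 : ((t m - 1 : ℕ) : ℤ) = (t m : ℤ) - 1 := by omega
        rw [hcast2] at hIH1
        rw [show (s:ℤ) - 1 - 1 = (s:ℤ) - 2 by ring] at hIH1 hIH2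
        rw [show (s:ℤ) - 1 - ((t m:ℤ) - 1) - 1 = (s:ℤ) - (t m:ℤ) - 1 by ring] at hIH1
        rw [show (s:ℤ) - 1 - (t m:ℤ) - 1 = (s:ℤ) - (t m:ℤ) - 2 by ring] at hIH2
        rw [hstep, show (2 * (Real.pi:ℂ) * Complex.I)⁻¹ * ((a i - a m)⁻¹ *
            ((∮ z in C(c, R), (∏ k ∈ Finset.Icc 1 m,
                (z - a k) ^ (Function.update t m (t m - 1)) k)⁻¹) -
             (∮ z in C(c, R), (∏ k ∈ Finset.Icc 1 m,
                (z - a k) ^ (Function.update t i (t i - 1)) k)⁻¹)))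
          = (a i - a m)⁻¹ * ((2 * (Real.pi:ℂ) * Complex.I)⁻¹ *
              (∮ z in C(c, R), (∏ k ∈ Finset.Icc 1 m,
                (z - a k) ^ (Function.update t m (t m - 1)) k)⁻¹) -
            (2 * (Real.pi:ℂ) * Complex.I)⁻¹ *
              (∮ z in C(c, R), (∏ k ∈ Finset.Icc 1 m,
                (z - a k) ^ (Function.update t i (t i - 1)) k)⁻¹)) from by ring,
          norm_mul, norm_inv]
        have hd1 : ‖a i - a m‖⁻¹ ≤ lam⁻¹ := by
          apply inv_anti₀ hlam
          exact hlamle i hiIn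
        calc ‖a i - a m‖⁻¹ * ‖(2 * (Real.pi:ℂ) * Complex.I)⁻¹ *
              (∮ z in C(c, R), (∏ k ∈ Finset.Icc 1 m,
                (z - a k) ^ (Function.update t m (t m - 1)) k)⁻¹) -
            (2 * (Real.pi:ℂ) * Complex.I)⁻¹ *
              (∮ z in C(c, R), (∏ k ∈ Finset.Icc 1 m,
                (z - a k) ^ (Function.update t i (t i - 1)) k)⁻¹)‖
            ≤ lam⁻¹ * (‖(2 * (Real.pi:ℂ) * Complex.I)⁻¹ *
              (∮ z in C(c, R), (∏ k ∈ Finset.Icc 1 m,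
                (z - a k) ^ (Function.update t m (t m - 1)) k)⁻¹)‖ +
              ‖(2 * (Real.pi:ℂ) * Complex.I)⁻¹ *
              (∮ z in C(c, R), (∏ k ∈ Finset.Icc 1 m,
                (z - a k) ^ (Function.update t i (t i - 1)) k)⁻¹)‖) :=
              mul_le_mul hd1 (norm_sub_le _ _) (norm_nonneg _) (inv_nonneg.2 hlam.le)
          _ ≤ lam⁻¹ * (2 ^ ((s:ℤ) - 2) / (lam ^ ((t m:ℤ) - 1) * δ ^ ((s:ℤ) - (t m:ℤ) - 1)) +
                2 ^ ((s:ℤ) - 2) / (lam ^ (t m:ℤ) * δ ^ ((s:ℤ) - (t m:ℤ) - 2))) :=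
              mul_le_mul_of_nonneg_left (add_le_add hIH1 hIH2) (inv_nonneg.2 hlam.le)
          _ ≤ 2 ^ ((s:ℤ) - 1) / (lam ^ (t m:ℤ) * δ ^ ((s:ℤ) - (t m:ℤ) - 1)) :=
              arith1 hδ0 hdl (s:ℤ) (t m:ℤ)

/-- **Lemma `key contour0`.**  Let `Γ` be the circle of center `c` and radius
`R > 0`, let `a_1, …, a_m` be pairwise distinct points with `a_1, …, a_l` inside `Γ` and
`a_{l+1}, …, a_m` outside `Γ` (`1 ≤ l < m`), and let `t_1, …, t_m` be nonnegative integers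
with `s = ∑ t_i`, `t = t_m`, `δ = min_{i ≤ l < j} |a_i − a_j|` and `λ = min_{i ≤ l} |a_i − a_m|`.
Then `|(1/(2πi)) ∮_Γ dz / ∏_i (z − a_i)^{t_i}| ≤ 2^{s−1} / (λ^t δ^{s−t−1})`. -/
theorem contour_mixed_poles_bound {m l : ℕ} (hl1 : 1 ≤ l) (hlm : l < m)
    (c : ℂ) (R : ℝ) (hR : 0 < R) (a : ℕ → ℂ)
    (hinj : ∀ i ∈ Finset.Icc 1 m, ∀ j ∈ Finset.Icc 1 m, a i = a j → i = j)
    (hin : ∀ i ∈ Finset.Icc 1 l, ‖a i - c‖ < R)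
    (hout : ∀ j ∈ Finset.Icc (l + 1) m, R < ‖a j - c‖)
    (t : ℕ → ℕ) :
    ‖(2 * (Real.pi : ℂ) * Complex.I)⁻¹ *
        (∮ z in C(c, R), (∏ i ∈ Finset.Icc 1 m, (z - a i) ^ t i)⁻¹)‖ ≤
      (2 : ℝ) ^ ((∑ i ∈ Finset.Icc 1 m, t i : ℤ) - 1) /
        ((sInf {d : ℝ | ∃ i ∈ Finset.Icc 1 l, d = ‖a i - a m‖}) ^ (t m : ℤ) *
          (sInf {d : ℝ | ∃ i ∈ Finset.Icc 1 l, ∃ j ∈ Finset.Icc (l + 1) m,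
              d = ‖a i - a j‖}) ^
            ((∑ i ∈ Finset.Icc 1 m, t i : ℤ) - (t m : ℤ) - 1)) := by
  set Λ : Set ℝ := {d : ℝ | ∃ i ∈ Finset.Icc 1 l, d = ‖a i - a m‖} with hΛdef
  set Δ : Set ℝ := {d : ℝ | ∃ i ∈ Finset.Icc 1 l, ∃ j ∈ Finset.Icc (l + 1) m,
      d = ‖a i - a j‖} with hΔdef
  have h1In : 1 ∈ Finset.Icc 1 l := Finset.mem_Icc.2 ⟨le_refl 1, hl1⟩
  have hmOut : m ∈ Finset.Icc (l + 1) m := Finset.mem_Icc.2 ⟨hlm, le_refl m⟩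
  have hΛfin : Λ.Finite := by
    have : Λ = (fun i => ‖a i - a m‖) '' ↑(Finset.Icc 1 l) := by
      ext d; simp [hΛdef, eq_comm]
    rw [this]
    exact ((Finset.Icc 1 l).finite_toSet).image _
  have hΔfin : Δ.Finite := by
    have : Δ = Set.image2 (fun i j => ‖a i - a j‖)
        ↑(Finset.Icc 1 l) ↑(Finset.Icc (l + 1) m) := by
      ext d; simp [hΔdef, Set.mem_image2, eq_comm]
    rw [this]
    exact Set.Finite.image2 _ ((Finset.Icc 1 l).finite_toSet)
      ((Finset.Icc (l + 1) m).finite_toSet)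
  have hΛne : Λ.Nonempty := ⟨_, ⟨1, h1In, rfl⟩⟩
  have hΔne : Δ.Nonempty := ⟨_, ⟨1, h1In, m, hmOut, rfl⟩⟩
  have hδle : ∀ i ∈ Finset.Icc 1 l, ∀ j ∈ Finset.Icc (l + 1) m,
      sInf Δ ≤ ‖a i - a j‖ := fun i hi j hj =>
    csInf_le hΔfin.bddBelow ⟨i, hi, j, hj, rfl⟩
  have hlamle : ∀ i ∈ Finset.Icc 1 l, sInf Λ ≤ ‖a i - a m‖ := fun i hi =>
    csInf_le hΛfin.bddBelow ⟨i, hi, rfl⟩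
  have hdl : sInf Δ ≤ sInf Λ := by
    apply le_csInf hΛne
    rintro d ⟨i, hi, rfl⟩
    exact hδle i hi m hmOut
  have hδ0 : 0 < sInf Δ := by
    obtain ⟨i, hi, j, hj, hd⟩ := hΔne.csInf_mem hΔfin
    rw [hd]
    apply norm_pos_iff.2
    apply sub_ne_zero.2
    intro h
    exact absurd (h ▸ hin i hi) (not_lt.2 (hout j hj).le)
  rw [show ‖(2 * (Real.pi : ℂ) * Complex.I)⁻¹ *
      (∮ z in C(c, R), (∏ i ∈ Finset.Icc 1 m, (z - a i) ^ t i)⁻¹)‖ =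
      ‖(2 * (Real.pi : ℂ) * Complex.I)⁻¹ *
      (∮ z in C(c, R), (∏ i ∈ Finset.Icc 1 m, (z - a i) ^ t i)⁻¹)‖ from
    rfl]
  simp only [← Nat.cast_sum]
  exact aux hl1 hlm c hR a hin hout hδ0 hdl hδle hlamle (∑ i ∈ Finset.Icc 1 m, t i) t rfl
end
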